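/- Let ν be a probability measure on a measurable space and let f, g be real-valued functions that are square-integrable with respect to ν. Write m_f = ∫ f dν, m_g = ∫ g dν, s_f = √(∫ (f − m_f)² dν), and s_g = √(∫ (g − m_g)² dν). Then ∫ (f − g)² dν ≥ (m_f − m_g)² + (s_f − s_g)². -/

import Mathlib

open MeasureTheory RealInnerProductSpace

-- Integrability of product of two L² functions
lemma aux_int_mul {Ω : Type*} [MeasurableSpace Ω] {ν : Measure Ω} {F G : Ω → ℝ}
    (hF : MemLp F 2 ν) (hG : MemLp G 2 ν) :
    Integrable (fun x => F x * G x) ν := by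
  have h : Integrable (fun x => (((F x + G x) ^ 2 - F x ^ 2) - G x ^ 2) * (1/2 : ℝ)) ν :=
    (((hF.add hG).integrable_sq.sub hF.integrable_sq).sub hG.integrable_sq).mul_const _
  refine h.congr (ae_of_all _ fun x => ?_)
  ring

-- Cauchy–Schwarz for integrals
lemma aux_cs {Ω : Type*} [MeasurableSpace Ω] {ν : Measure Ω} {F G : Ω → ℝ}
    (hF : MemLp F 2 ν) (hG : MemLp G 2 ν) :
    ∫ x, F x * G x ∂ν ≤ Real.sqrt (∫ x, F x ^ 2 ∂ν) * Real.sqrt (∫ x, G x ^ 2 ∂ν) := by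
  set F' := hF.toLp F
  set G' := hG.toLp G
  have hFG : (inner ℝ F' G' : ℝ) = ∫ x, F x * G x ∂ν := by
    rw [L2.inner_def]
    refine integral_congr_ae ?_
    filter_upwards [hF.coeFn_toLp, hG.coeFn_toLp] with x hx hy
    simp [F', G', hx, hy, RCLike.inner_apply, mul_comm]
  have hFF : (∫ x, F x ^ 2 ∂ν) = ‖F'‖ ^ 2 := by
    rw [← real_inner_self_eq_norm_sq, L2.inner_def]
    refine (integral_congr_ae ?_).symm
    filter_upwards [hF.coeFn_toLp] with x hx
    simp [F', hx, RCLike.inner_apply, sq]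
  have hGG : (∫ x, G x ^ 2 ∂ν) = ‖G'‖ ^ 2 := by
    rw [← real_inner_self_eq_norm_sq, L2.inner_def]
    refine (integral_congr_ae ?_).symm
    filter_upwards [hG.coeFn_toLp] with x hx
    simp [G', hx, RCLike.inner_apply, sq]
  rw [hFF, hGG, Real.sqrt_sq (norm_nonneg _), Real.sqrt_sq (norm_nonneg _), ← hFG]
  exact real_inner_le_norm F' G'

theorem stmt16 {Ω : Type*} [MeasurableSpace Ω] (ν : Measure Ω) [IsProbabilityMeasure ν]
    (f g : Ω → ℝ) (hf : MemLp f 2 ν) (hg : MemLp g 2 ν) :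
    ((∫ x, f x ∂ν) - ∫ x, g x ∂ν) ^ 2 +
        (Real.sqrt (∫ x, (f x - ∫ y, f y ∂ν) ^ 2 ∂ν) -
          Real.sqrt (∫ x, (g x - ∫ y, g y ∂ν) ^ 2 ∂ν)) ^ 2
      ≤ ∫ x, (f x - g x) ^ 2 ∂ν := by
  set a := ∫ x, f x ∂ν with ha
  set b := ∫ x, g x ∂ν with hb
  set F := fun x => f x - a with hFdef
  set G := fun x => g x - b with hGdef
  have hF : MemLp F 2 ν := hf.sub (memLp_const a)
  have hG : MemLp G 2 ν := hg.sub (memLp_const b)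
  have hfi : Integrable f ν := hf.integrable (by norm_num)
  have hgi : Integrable g ν := hg.integrable (by norm_num)
  have hFi : Integrable F ν := hfi.sub (integrable_const a)
  have hGi : Integrable G ν := hgi.sub (integrable_const b)
  have hF0 : ∫ x, F x ∂ν = 0 := by
    simp [hFdef, integral_sub hfi (integrable_const a), ← ha]
  have hG0 : ∫ x, G x ∂ν = 0 := by
    simp [hGdef, integral_sub hgi (integrable_const b), ← hb]
  have hF2 : Integrable (fun x => F x ^ 2) ν := hF.integrable_sq
  have hG2 : Integrable (fun x => G x ^ 2) ν := hG.integrable_sq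
  have hFG : Integrable (fun x => F x * G x) ν := aux_int_mul hF hG
  have h1 : Integrable (fun x => F x ^ 2 + G x ^ 2 - 2 * (F x * G x)) ν :=
    (hF2.add hG2).sub (hFG.const_mul 2)
  have h2 : Integrable (fun x => (2 * (a - b)) * F x + ((-(2 * (a - b))) * G x + (a - b) ^ 2)) ν :=
    (hFi.const_mul _).add ((hGi.const_mul _).add (integrable_const _))
  have h3 : Integrable (fun x => (2 * (a - b)) * F x) ν := hFi.const_mul _
  have h4 : Integrable (fun x => (-(2 * (a - b))) * G x + (a - b) ^ 2) ν :=
    (hGi.const_mul _).add (integrable_const _)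
  have h5 : Integrable (fun x => (-(2 * (a - b))) * G x) ν := hGi.const_mul _
  have h6 : Integrable (fun x => F x ^ 2 + G x ^ 2) ν := hF2.add hG2
  have h7 : Integrable (fun x => 2 * (F x * G x)) ν := hFG.const_mul 2
  have key : ∫ x, (f x - g x) ^ 2 ∂ν
      = (∫ x, F x ^ 2 ∂ν) + (∫ x, G x ^ 2 ∂ν) - 2 * (∫ x, F x * G x ∂ν) + (a - b) ^ 2 := by
    have e1 : ∫ x, (f x - g x) ^ 2 ∂ν
        = ∫ x, ((F x ^ 2 + G x ^ 2 - 2 * (F x * G x)) +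
            ((2 * (a - b)) * F x + ((-(2 * (a - b))) * G x + (a - b) ^ 2))) ∂ν := by
      refine integral_congr_ae (ae_of_all _ fun x => ?_)
      simp only [hFdef, hGdef]
      ring
    rw [e1, integral_add h1 h2, integral_sub h6 h7, integral_add hF2 hG2,
      integral_add h3 h4, integral_add h5 (integrable_const _),
      integral_const_mul, integral_const_mul, integral_const_mul, hF0, hG0]
    simp
  have hF2nn : 0 ≤ ∫ x, F x ^ 2 ∂ν := integral_nonneg fun x => sq_nonneg _
  have hG2nn : 0 ≤ ∫ x, G x ^ 2 ∂ν := integral_nonneg fun x => sq_nonneg _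
  have hsF : Real.sqrt (∫ x, F x ^ 2 ∂ν) ^ 2 = ∫ x, F x ^ 2 ∂ν := Real.sq_sqrt hF2nn
  have hsG : Real.sqrt (∫ x, G x ^ 2 ∂ν) ^ 2 = ∫ x, G x ^ 2 ∂ν := Real.sq_sqrt hG2nn
  have hcs := aux_cs hF hG
  have goal_eq : (∫ x, (f x - ∫ y, f y ∂ν) ^ 2 ∂ν) = ∫ x, F x ^ 2 ∂ν := rfl
  have goal_eq' : (∫ x, (g x - ∫ y, g y ∂ν) ^ 2 ∂ν) = ∫ x, G x ^ 2 ∂ν := rfl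
  rw [goal_eq, goal_eq', key]
  nlinarith [hcs, hsF, hsG]
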